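/- A locally finite connected constructible graph admits a natural dominating order, i.e., a dominating order of order type at most ω. Hence a locally finite graph is constructible if and only if it admits a dominating order order-isomorphic to an initial segment of ℕ. -/

import Mathlib

structure RefGraph (V : Type*) where
  Adj : V → V → Prop
  symm : ∀ u v, Adj u v → Adj v u
  refl : ∀ v, Adj v v

/-- `r` (a strict order relation) is a dominating order for `G`: every vertex `ν`
which is not minimal is dominated in `G_{≤ν}` by some earlier vertex `μ`:
`μ` is adjacent to `ν` and to every neighbour of `ν` among the vertices `≤ ν`. -/
def IsDomOrder {V : Type*} (G : RefGraph V) (r : V → V → Prop) : Prop :=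
  ∀ ν, (∃ μ, r μ ν) →
    ∃ μ, r μ ν ∧ G.Adj μ ν ∧ ∀ η, (r η ν ∨ η = ν) → G.Adj ν η → G.Adj μ η

/-- `G` is constructible: some well order of the vertex set is a dominating order. -/
def Constructible {V : Type*} (G : RefGraph V) : Prop :=
  ∃ r : V → V → Prop, IsWellOrder V r ∧ IsDomOrder G r

/-- `G` is locally finite: every vertex has finitely many neighbours. -/
def GraphLocFin {V : Type*} (G : RefGraph V) : Prop :=
  ∀ v, {u | G.Adj u v}.Finite

namespace CINDOAux

variable {V : Type*}

/-- `b` is an `r`-smaller neighbour of `a`. -/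
def desc (G : RefGraph V) (r : V → V → Prop) (a b : V) : Prop :=
  r b a ∧ G.Adj a b

/-- The set of vertices reachable from `w` by repeatedly passing to `r`-smaller
neighbours. -/
def hull (G : RefGraph V) (r : V → V → Prop) (w : V) : Set V :=
  {u | Relation.ReflTransGen (desc G r) w u}

theorem hull_self (G : RefGraph V) (r : V → V → Prop) (w : V) :
    w ∈ hull G r w := Relation.ReflTransGen.refl

theorem hull_closed {G : RefGraph V} {r : V → V → Prop} {w u x : V}
    (hu : u ∈ hull G r w) (h : desc G r u x) : x ∈ hull G r w :=
  Relation.ReflTransGen.tail hu h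

theorem hull_finite {G : RefGraph V} {r : V → V → Prop} (hwf : WellFounded r)
    (hlf : GraphLocFin G) (w : V) : (hull G r w).Finite := by
  refine hwf.induction (C := fun w => (hull G r w).Finite) w ?_
  intro w IH
  have hN : {u | desc G r w u}.Finite :=
    (hlf w).subset (fun u hu => G.symm w u hu.2)
  have hsub : hull G r w ⊆ insert w (⋃ u ∈ {u | desc G r w u}, hull G r u) := by
    intro x hx
    rcases Relation.ReflTransGen.cases_head hx with rfl | ⟨c, hc, hcx⟩
    · exact Set.mem_insert _ _
    · exact Set.mem_insert_of_mem _ (Set.mem_biUnion hc hcx)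
  exact ((hN.biUnion (fun u hu => IH u hu.1)).insert w).subset hsub

theorem min_mem_hull {G : RefGraph V} {r : V → V → Prop} (hwo : IsWellOrder V r)
    (hdom : IsDomOrder G r) {v₀ : V} (hmin : ∀ u, ¬ r u v₀) (w : V) :
    v₀ ∈ hull G r w := by
  refine hwo.wf.induction (C := fun w => v₀ ∈ hull G r w) w ?_
  intro w IH
  by_cases hw : w = v₀
  · exact hw ▸ hull_self G r w
  · have hr : r v₀ w := by
      rcases @trichotomous _ r hwo.toTrichotomous v₀ w with h | h | h
      · exact h
      · exact absurd h.symm hw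
      · exact absurd h (hmin w)
    obtain ⟨μ, hμr, hμa, -⟩ := hdom w ⟨v₀, hr⟩
    exact Relation.ReflTransGen.head ⟨hμr, G.symm μ w hμa⟩ (IH μ hμr)

theorem countable_of_reach {G : RefGraph V} (hlf : GraphLocFin G) (v₀ : V)
    (h : ∀ w, Relation.ReflTransGen (fun a b => G.Adj a b) v₀ w) :
    Countable V := by
  let ball : ℕ → Set V := fun n => Nat.rec {v₀} (fun _ B => ⋃ v ∈ B, {u | G.Adj u v}) n
  have hfin : ∀ n, (ball n).Finite := by
    intro n
    induction n with
    | zero => exact Set.finite_singleton _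
    | succ n ih => exact ih.biUnion (fun v _ => hlf v)
  have hcover : ∀ w, ∃ n, w ∈ ball n := by
    intro w
    induction h w with
    | refl => exact ⟨0, rfl⟩
    | tail _ hbc ih =>
      obtain ⟨n, hn⟩ := ih
      exact ⟨n + 1, Set.mem_biUnion hn (G.symm _ _ hbc)⟩
  have huniv : (Set.univ : Set V).Countable := by
    refine Set.Countable.mono ?_ (Set.countable_iUnion fun n => (hfin n).countable)
    intro w _
    obtain ⟨n, hn⟩ := hcover w
    exact Set.mem_iUnion.2 ⟨n, hn⟩
  exact Set.countable_univ_iff.mp huniv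

end CINDOAux

open CINDOAux in
/-- a locally finite graph is constructible if and only if it admits a
natural dominating order, i.e. a dominating order order-isomorphic to an initial
segment of ℕ (equivalently, one induced by an injection of the vertices into ℕ). -/
theorem constructible_iff_natural_dominating_order {V : Type*}
    (G : RefGraph V) (hlf : GraphLocFin G) :
    Constructible G ↔
      ∃ f : V → ℕ, Function.Injective f ∧ IsDomOrder G (fun u v => f u < f v) := by
  constructor
  · rintro ⟨r, hwo, hdom⟩
    classical
    rcases isEmpty_or_nonempty V with hV | hV
    · exact ⟨fun _ => 0, fun a => (hV.false a).elim, fun ν _ => (hV.false ν).elim⟩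
    -- the minimum of the well order
    have hne : (Set.univ : Set V).Nonempty := Set.univ_nonempty
    set v₀ : V := hwo.wf.min Set.univ hne with hv₀def
    have hmin : ∀ u, ¬ r u v₀ := fun u hu =>
      hwo.wf.not_lt_min Set.univ (Set.mem_univ u) hu
    have hasymm : ∀ a b : V, r a b → ¬ r b a := fun a b => hwo.wf.asymmetric a b
    -- countability
    have hmh : ∀ w, v₀ ∈ hull G r w := min_mem_hull hwo hdom hmin
    haveI : Countable V := by
      refine countable_of_reach hlf v₀ (fun w => ?_)
      have h1 : Relation.ReflTransGen (fun a b => G.Adj a b) w v₀ :=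
        Relation.ReflTransGen.mono (r := desc G r) (fun a b h => h.2) _ _ (hmh w)
      exact (haveI : Std.Symm (fun a b : V => G.Adj a b) := ⟨fun a b h => G.symm a b h⟩; Std.Symm.symm _ _ h1)
    obtain ⟨e, he⟩ := exists_surjective_nat V
    -- the stages
    set F : ℕ → Set V := fun n => Nat.rec ∅ (fun k Fk => Fk ∪ hull G r (e k)) n with hFdef
    have hFsucc : ∀ k, F (k + 1) = F k ∪ hull G r (e k) := fun _ => rfl
    have hFfin : ∀ n, (F n).Finite := by
      intro n
      induction n with
      | zero => exact Set.finite_empty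
      | succ k ih => exact ih.union (hull_finite hwo.wf hlf _)
    have hFmono : ∀ {m n : ℕ}, m ≤ n → F m ⊆ F n := by
      intro m n h
      exact monotone_nat_of_le_succ (fun k => Set.subset_union_left) h
    have hFclosed : ∀ n x y, x ∈ F n → desc G r x y → y ∈ F n := by
      intro n
      induction n with
      | zero => intro x y hx _; exact absurd hx (Set.notMem_empty x)
      | succ k ih =>
        intro x y hx hd
        rcases hx with hx | hx
        · exact Or.inl (ih x y hx hd)
        · exact Or.inr (hull_closed hx hd)
    have hcov : ∀ v, ∃ n, v ∈ F n := by
      intro v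
      obtain ⟨k, hk⟩ := he v
      exact ⟨k + 1, Or.inr (hk ▸ hull_self G r (e k))⟩
    set rank : V → ℕ := fun v => Nat.find (hcov v) with hrankdef
    have hrank_mem : ∀ v, v ∈ F (rank v) := fun v => Nat.find_spec (hcov v)
    have hrank_le : ∀ {v n}, v ∈ F n → rank v ≤ n := fun {v n} h => Nat.find_min' (hcov v) h
    have hrank_pos : ∀ v, 1 ≤ rank v := by
      intro v
      rcases Nat.eq_zero_or_pos (rank v) with h | h
      · have := hrank_mem v
        rw [h] at this
        exact absurd this (Set.notMem_empty v)
      · exact h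
    have hrank_v₀ : rank v₀ = 1 := by
      refine le_antisymm (hrank_le (n := 1) ?_) (hrank_pos v₀)
      exact Set.mem_union_right _ (hmh (e 0))
    -- the natural order
    set s : V → V → Prop := fun u v => rank u < rank v ∨ (rank u = rank v ∧ r u v)
      with hsdef
    have hdesc_rank : ∀ {x y}, desc G r x y → rank y ≤ rank x := fun {x y} h =>
      hrank_le (hFclosed _ x y (hrank_mem x) h)
    have hs_irrefl : ∀ v, ¬ s v v := by
      rintro v (h | ⟨-, h⟩)
      · exact lt_irrefl _ h
      · exact hasymm v v h h
    have hs_trans : ∀ {a b c}, s a b → s b c → s a c := by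
      rintro a b c (h1 | ⟨h1, h1'⟩) (h2 | ⟨h2, h2'⟩)
      · exact Or.inl (h1.trans h2)
      · exact Or.inl (h2 ▸ h1)
      · exact Or.inl (h1 ▸ h2)
      · exact Or.inr ⟨h1.trans h2, (haveI := hwo; IsTrans.trans _ _ _ h1' h2')⟩
    have hs_trich : ∀ {u v : V}, u ≠ v → s u v ∨ s v u := by
      intro u v hne
      rcases Nat.lt_trichotomy (rank u) (rank v) with h | h | h
      · exact Or.inl (Or.inl h)
      · rcases @trichotomous _ r hwo.toTrichotomous u v with h' | h' | h'
        · exact Or.inl (Or.inr ⟨h, h'⟩)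
        · exact absurd h' hne
        · exact Or.inr (Or.inr ⟨h.symm, h'⟩)
      · exact Or.inr (Or.inl h)
    -- s is a dominating order
    have hs_dom : IsDomOrder G s := by
      rintro ν ⟨μ₀, hμ₀⟩
      have hν0 : ν ≠ v₀ := by
        rintro rfl
        rcases hμ₀ with h | ⟨-, h⟩
        · have h1 := hrank_pos μ₀
          rw [hrank_v₀] at h
          omega
        · exact hmin μ₀ h
      have hrν : ∃ μ, r μ ν := by
        refine ⟨v₀, ?_⟩
        rcases @trichotomous _ r hwo.toTrichotomous v₀ ν with h | h | h
        · exact h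
        · exact absurd h.symm hν0
        · exact absurd h (hmin ν)
      obtain ⟨d, hdr, hda, hddom⟩ := hdom ν hrν
      have hdd : desc G r ν d := ⟨hdr, G.symm d ν hda⟩
      refine ⟨d, ?_, hda, ?_⟩
      · rcases lt_or_eq_of_le (hdesc_rank hdd) with h | h
        · exact Or.inl h
        · exact Or.inr ⟨h, hdr⟩
      · rintro η (hη | rfl) hadj
        · rcases @trichotomous _ r hwo.toTrichotomous η ν with h | h | h
          · exact hddom η (Or.inl h) hadj
          · exact hddom η (Or.inr h) hadj
          · -- impossible: η would force rank ν ≤ rank η while s η ν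
            have hd2 : desc G r η ν := ⟨h, G.symm ν η hadj⟩
            have hle : rank ν ≤ rank η := hdesc_rank hd2
            rcases hη with h' | ⟨h', h''⟩
            · exact absurd h' (Nat.not_lt.2 hle)
            · exact absurd h (hasymm η ν h'')
        · exact hddom _ (Or.inr rfl) hadj
    -- convert s into an injection into ℕ
    have hpredfin : ∀ v, {u | s u v}.Finite := by
      intro v
      refine (hFfin (rank v)).subset ?_
      intro u hu
      have : rank u ≤ rank v := by
        rcases hu with h | ⟨h, -⟩
        · exact le_of_lt h
        · exact le_of_eq h
      exact hFmono this (hrank_mem u)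
    set f : V → ℕ := fun v => (hpredfin v).toFinset.card with hfdef
    have hf_lt : ∀ {u v}, s u v → f u < f v := by
      intro u v huv
      refine Finset.card_lt_card ?_
      rw [Finset.ssubset_iff_of_subset]
      · exact ⟨u, (hpredfin v).mem_toFinset.2 huv,
          fun hc => hs_irrefl u ((hpredfin u).mem_toFinset.1 hc)⟩
      · intro x hx
        exact (hpredfin v).mem_toFinset.2 (hs_trans ((hpredfin u).mem_toFinset.1 hx) huv)
    have hf_iff : ∀ {u v}, s u v ↔ f u < f v := by
      intro u v
      refine ⟨hf_lt, ?_⟩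
      intro h
      by_contra hns
      rcases eq_or_ne u v with rfl | hne
      · exact lt_irrefl _ h
      · rcases hs_trich hne with h' | h'
        · exact hns h'
        · exact absurd h (Nat.not_lt.2 (le_of_lt (hf_lt h')))
    have hfinj : Function.Injective f := by
      intro u v h
      by_contra hne
      rcases hs_trich hne with h' | h'
      · exact absurd h (Nat.ne_of_lt (hf_lt h'))
      · exact absurd h.symm (Nat.ne_of_lt (hf_lt h'))
    refine ⟨f, hfinj, ?_⟩
    rintro ν ⟨μ, hμ⟩
    obtain ⟨d, hd1, hd2, hd3⟩ := hs_dom ν ⟨μ, hf_iff.2 hμ⟩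
    refine ⟨d, hf_iff.1 hd1, hd2, ?_⟩
    rintro η (hη | rfl) hadj
    · exact hd3 η (Or.inl (hf_iff.2 hη)) hadj
    · exact hd3 _ (Or.inr rfl) hadj
  · rintro ⟨f, hinj, hdom⟩
    refine ⟨fun u v => f u < f v, ?_, hdom⟩
    haveI h1 : IsTrichotomous V (fun u v => f u < f v) := by
      constructor
      intro a b hab hba
      rcases Nat.lt_trichotomy (f a) (f b) with h | h | h
      · exact absurd h hab
      · exact hinj h
      · exact absurd h hba
    haveI h2 : IsTrans V (fun u v => f u < f v) := ⟨fun _ _ _ => Nat.lt_trans⟩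
    haveI h3 : IsWellFounded V (fun u v => f u < f v) :=
      ⟨InvImage.wf f Nat.lt_wfRel.wf⟩
    exact { }
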